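/- Let A be a real symmetric n×n matrix and P a semi-orthogonal n×k matrix with PᵀP = Iₖ. Then tr(PᵀAP) equals the sum of the k eigenvalues of PᵀAP (with multiplicity), and consequently λ₁+⋯+λₖ ≤ tr(PᵀAP) ≤ λ_{n−k+1}+⋯+λₙ, where λ₁ ≤ ⋯ ≤ λₙ are the eigenvalues of A. -/

import Mathlib

open Matrix

lemma trace_eq_sum_eigs' {m : ℕ} {B : Matrix (Fin m) (Fin m) ℝ} (hB : B.IsHermitian) :
    B.trace = ∑ j, hB.eigenvalues j := by
  conv_lhs => rw [hB.spectral_theorem, Unitary.conjStarAlgAut_apply]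
  rw [Matrix.trace_mul_cycle]
  rw [show (star (hB.eigenvectorUnitary : Matrix (Fin m) (Fin m) ℝ)) *
      (hB.eigenvectorUnitary : Matrix (Fin m) (Fin m) ℝ) = 1 from
    (Matrix.mem_unitaryGroup_iff').mp hB.eigenvectorUnitary.2]
  rw [one_mul, Matrix.trace_diagonal]
  simp [RCLike.ofReal]

lemma sum_low_eq' {n k : ℕ} (hkn : k ≤ n) (lam : Fin n → ℝ) :
    (∑ i : Fin k, lam (Fin.castLE hkn i)) =
      ∑ j ∈ Finset.univ.filter (fun j : Fin n => (j : ℕ) < k), lam j := by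
  refine Finset.sum_bij' (fun (i : Fin k) _ => Fin.castLE hkn i)
    (fun j hj => ⟨(j : ℕ), (Finset.mem_filter.mp hj).2⟩) ?_ ?_ ?_ ?_ ?_
  · intro a _; simp [Fin.castLE]
  · intro a _; exact Finset.mem_univ _
  · intro a _; rfl
  · intro a _; rfl
  · intro a _; rfl

lemma sum_high_eq' {n k : ℕ} (hkn : k ≤ n) (lam : Fin n → ℝ) :
    (∑ i : Fin k, lam ⟨n - k + i, Nat.lt_of_lt_of_le (Nat.add_lt_add_left i.isLt _) (by omega)⟩) =
      ∑ j ∈ Finset.univ.filter (fun j : Fin n => n - k ≤ (j : ℕ)), lam j := by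
  refine Finset.sum_bij' (fun (i : Fin k) _ => (⟨n - k + i, Nat.lt_of_lt_of_le (Nat.add_lt_add_left i.isLt _) (by omega)⟩ : Fin n))
    (fun j hj => ⟨(j : ℕ) - (n - k), by
      have h1 := (Finset.mem_filter.mp hj).2; have h2 := j.isLt; omega⟩) ?_ ?_ ?_ ?_ ?_
  · intro a _; simp only [Finset.mem_filter]; exact ⟨Finset.mem_univ _, by omega⟩
  · intro a _; exact Finset.mem_univ _
  · intro a _; exact Fin.ext (by simp)
  · intro a ha; have h1 := (Finset.mem_filter.mp ha).2; exact Fin.ext (by simp; omega)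
  · intro a _; rfl

lemma tsum_forced_one' {n : ℕ} (t : Fin n → ℝ) (ht1 : ∀ j, t j ≤ 1)
    (hts : ∑ j, t j = (n : ℝ)) : ∀ j, t j = 1 := by
  intro j
  have h : ∑ j : Fin n, t j = ∑ j : Fin n, (1 : ℝ) := by
    rw [hts]; simp
  exact (Finset.sum_eq_sum_iff_of_le (fun j _ => ht1 j)).mp h j (Finset.mem_univ j)

lemma key_bounds' {n k : ℕ} (hkn : k ≤ n) (lam : Fin n → ℝ) (hlam : Monotone lam)
    (t : Fin n → ℝ) (ht0 : ∀ j, 0 ≤ t j) (ht1 : ∀ j, t j ≤ 1) (hts : ∑ j, t j = (k : ℝ)) :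
    (∑ j ∈ Finset.univ.filter (fun j : Fin n => (j : ℕ) < k), lam j) ≤ (∑ j, lam j * t j) ∧
    (∑ j, lam j * t j) ≤ ∑ j ∈ Finset.univ.filter (fun j : Fin n => n - k ≤ (j : ℕ)), lam j := by
  set S := Finset.univ.filter (fun j : Fin n => (j : ℕ) < k) with hS
  set T := Finset.univ.filter (fun j : Fin n => n - k ≤ (j : ℕ)) with hT
  have hScard : S.card = k := by
    have : S = Finset.univ.map (Fin.castLEEmb hkn) := by
      ext j; simp [hS, Fin.castLEEmb]
      constructor
      · intro h; exact ⟨⟨j, h⟩, rfl⟩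
      · rintro ⟨a, rfl⟩; simp [Fin.castLE]
    rw [this]; simp
  have hTcard : T.card = k := by
    have : T = Finset.univ.map ⟨fun (i : Fin k) => (⟨n - k + i, Nat.lt_of_lt_of_le (Nat.add_lt_add_left i.isLt _) (by omega)⟩ : Fin n),
        by intro a b hab; have := Fin.mk.injEq _ _ _ _ ▸ hab; exact Fin.ext (by omega)⟩ := by
      ext j; simp [hT]
      constructor
      · intro h; exact ⟨⟨(j : ℕ) - (n - k), by have := j.isLt; omega⟩, Fin.ext (by show n - k + ((j : ℕ) - (n - k)) = (j : ℕ); omega)⟩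
      · rintro ⟨a, rfl⟩; show n ≤ n - k + (a : ℕ) + k; omega
    rw [this]; simp
  constructor
  · rcases eq_or_lt_of_le hkn with rfl | hk
    · have h1 := tsum_forced_one' t ht1 hts
      have hSu : S = Finset.univ := by ext j; simp [hS, j.isLt]
      rw [hSu]
      apply le_of_eq
      exact Finset.sum_congr rfl (fun j _ => by rw [h1 j]; ring)
    · set c := lam ⟨k, hk⟩ with hc
      have expand : (∑ j, lam j * t j) = c * (∑ j, t j) + ∑ j, (lam j - c) * t j := by
        rw [Finset.mul_sum, ← Finset.sum_add_distrib]
        exact Finset.sum_congr rfl (fun j _ => by ring)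
      have split : (∑ j, (lam j - c) * t j)
          = (∑ j ∈ S, (lam j - c) * t j) + ∑ j ∈ Sᶜ, (lam j - c) * t j :=
        (Finset.sum_add_sum_compl S _).symm
      have h1 : (0:ℝ) ≤ ∑ j ∈ Sᶜ, (lam j - c) * t j := by
        apply Finset.sum_nonneg; intro j hj
        have hjk : k ≤ (j : ℕ) := by simp [hS, Finset.mem_compl] at hj; omega
        have hcj : c ≤ lam j := hlam hjk
        have := ht0 j; nlinarith
      have h2 : (∑ j ∈ S, (lam j - c)) ≤ ∑ j ∈ S, (lam j - c) * t j := by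
        apply Finset.sum_le_sum; intro j hj
        have hjk : (j : ℕ) < k := by simp [hS] at hj; exact hj
        have hcj : lam j ≤ c := hlam (le_of_lt hjk)
        have := ht1 j; nlinarith
      have h3 : (∑ j ∈ S, (lam j - c)) = (∑ j ∈ S, lam j) - c * k := by
        rw [Finset.sum_sub_distrib, Finset.sum_const, hScard]; ring
      rw [expand, hts]
      linarith [split, h1, h2, h3]
  · rcases Nat.eq_zero_or_pos k with rfl | hkpos
    · have ht00 : ∀ j ∈ Finset.univ, t j = 0 := by
        rw [← Finset.sum_eq_zero_iff_of_nonneg (fun j _ => ht0 j)]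
        rw [hts]; simp
      have : (∑ j, lam j * t j) = 0 :=
        Finset.sum_eq_zero (fun j hj => by rw [ht00 j hj]; ring)
      rw [this]
      have hTe : T = ∅ := by
        ext j; simp [hT]
      rw [hTe]; simp
    · rcases eq_or_lt_of_le hkn with rfl | hk
      · have h1 := tsum_forced_one' t ht1 hts
        have hTu : T = Finset.univ := by ext j; simp [hT]
        rw [hTu]
        apply le_of_eq
        exact Finset.sum_congr rfl (fun j _ => by rw [h1 j]; ring)
      · have hnk : n - k < n := by omega
        set c := lam ⟨n - k, hnk⟩ with hc
        have expand : (∑ j, lam j * t j) = c * (∑ j, t j) + ∑ j, (lam j - c) * t j := by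
          rw [Finset.mul_sum, ← Finset.sum_add_distrib]
          exact Finset.sum_congr rfl (fun j _ => by ring)
        have split : (∑ j, (lam j - c) * t j)
            = (∑ j ∈ T, (lam j - c) * t j) + ∑ j ∈ Tᶜ, (lam j - c) * t j :=
          (Finset.sum_add_sum_compl T _).symm
        have h1 : (∑ j ∈ Tᶜ, (lam j - c) * t j) ≤ 0 := by
          apply Finset.sum_nonpos; intro j hj
          have hjk : (j : ℕ) < n - k := by simp [hT, Finset.mem_compl] at hj; omega
          have hcj : lam j ≤ c := hlam (le_of_lt hjk)
          have := ht0 j; nlinarith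
        have h2 : (∑ j ∈ T, (lam j - c) * t j) ≤ ∑ j ∈ T, (lam j - c) := by
          apply Finset.sum_le_sum; intro j hj
          have hjk : n - k ≤ (j : ℕ) := by simp [hT] at hj; omega
          have hcj : c ≤ lam j := hlam hjk
          have := ht1 j; nlinarith
        have h3 : (∑ j ∈ T, (lam j - c)) = (∑ j ∈ T, lam j) - c * k := by
          rw [Finset.sum_sub_distrib, Finset.sum_const, hTcard]; ring
        rw [expand, hts]
        linarith [split, h1, h2, h3]

/-- `tr(PᵀAP)` is the sum of the eigenvalues of `PᵀAP`, and it is bounded below by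
the sum of the `k` smallest and above by the sum of the `k` largest eigenvalues
of `A`. -/
theorem trace_coarse_bounds {n k : ℕ} (hkn : k ≤ n)
    (A : Matrix (Fin n) (Fin n) ℝ) (hA : A.IsHermitian)
    (P : Matrix (Fin n) (Fin k) ℝ) (hP : Pᵀ * P = 1)
    (hB : (Pᵀ * A * P).IsHermitian)
    (lam : Fin n → ℝ) (hlam : Monotone lam)
    (hlamA : ∃ e : Equiv.Perm (Fin n), lam = hA.eigenvalues ∘ e) :
    (Pᵀ * A * P).trace = (∑ j, hB.eigenvalues j) ∧
      (∑ i : Fin k, lam (Fin.castLE hkn i)) ≤ (Pᵀ * A * P).trace ∧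
      (Pᵀ * A * P).trace ≤ ∑ i : Fin k, lam ⟨n - k + i, by have := i.isLt; omega⟩ := by
  obtain ⟨e, he⟩ := hlamA
  set U := (hA.eigenvectorUnitary : Matrix (Fin n) (Fin n) ℝ) with hU
  set Q := P * Pᵀ with hQdef
  set M := star U * Q * U with hMdef
  have hUU : star U * U = 1 := Matrix.mem_unitaryGroup_iff'.mp hA.eigenvectorUnitary.2
  have hUU' : U * star U = 1 := Matrix.mem_unitaryGroup_iff.mp hA.eigenvectorUnitary.2
  have hPt : Pᴴ = Pᵀ := by ext i j; simp [Matrix.conjTranspose_apply]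
  have hQsym : Q.IsHermitian := by
    have := Matrix.isHermitian_mul_conjTranspose_self P
    rwa [hPt] at this
  have hQQ : Q * Q = Q := by
    rw [show Q * Q = P * (Pᵀ * P) * Pᵀ from by rw [hQdef]; simp only [Matrix.mul_assoc], hP,
      Matrix.mul_one]
  have hMM : M * M = M := by
    rw [hMdef]
    calc star U * Q * U * (star U * Q * U)
        = star U * (Q * (U * star U) * Q) * U := by noncomm_ring
      _ = star U * Q * U := by rw [hUU', mul_one, hQQ]
  have hMherm : M.IsHermitian := by
    rw [hMdef, Matrix.star_eq_conjTranspose]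
    exact Matrix.isHermitian_conjTranspose_mul_mul U hQsym
  have hMsym : ∀ i j, M i j = M j i := fun i j => by
    have h := hMherm.apply i j
    simpa using h.symm
  have hdiag : ∀ j, M j j = ∑ l, (M j l)^2 := by
    intro j
    conv_lhs => rw [← hMM, Matrix.mul_apply]
    exact Finset.sum_congr rfl (fun l _ => by rw [hMsym l j]; ring)
  have hdiag0 : ∀ j, 0 ≤ M j j := fun j => by
    rw [hdiag]; exact Finset.sum_nonneg (fun l _ => sq_nonneg _)
  have hdiag1 : ∀ j, M j j ≤ 1 := by
    intro j
    have h1 : (M j j)^2 ≤ M j j := by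
      conv_rhs => rw [hdiag]
      exact Finset.single_le_sum (fun l _ => sq_nonneg (M j l)) (Finset.mem_univ j)
    nlinarith [hdiag0 j]
  have htrM : ∑ j, M j j = (k : ℝ) := by
    have h0 : ∑ j, M j j = M.trace := rfl
    rw [h0, hMdef, Matrix.trace_mul_cycle, hUU', one_mul, hQdef,
      Matrix.trace_mul_comm, hP, Matrix.trace_one]
    simp
  have htr : (Pᵀ * A * P).trace = ∑ j, hA.eigenvalues j * M j j := by
    rw [Matrix.trace_mul_comm,
      show P * (Pᵀ * A) = Q * A from by rw [hQdef]; simp only [Matrix.mul_assoc]]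
    conv_lhs => rw [hA.spectral_theorem, Unitary.conjStarAlgAut_apply]
    rw [show Q * ((hA.eigenvectorUnitary : Matrix (Fin n) (Fin n) ℝ) *
        diagonal (RCLike.ofReal ∘ hA.eigenvalues) *
        star (hA.eigenvectorUnitary : Matrix (Fin n) (Fin n) ℝ))
      = (Q * U * diagonal (RCLike.ofReal ∘ hA.eigenvalues)) * star U from by
        rw [← hU]; simp only [Matrix.mul_assoc]]
    rw [Matrix.trace_mul_comm, show star U * (Q * U * diagonal (RCLike.ofReal ∘ hA.eigenvalues))
      = M * diagonal (RCLike.ofReal ∘ hA.eigenvalues) from by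
        rw [hMdef]; simp only [Matrix.mul_assoc]]
    rw [Matrix.trace]
    refine Finset.sum_congr rfl (fun j _ => ?_)
    rw [Matrix.diag_apply, Matrix.mul_diagonal]
    simp [RCLike.ofReal, mul_comm]
  -- transfer via the permutation e
  set t : Fin n → ℝ := fun j => M (e j) (e j) with ht
  have hts : ∑ j, t j = (k : ℝ) := by
    rw [ht, ← htrM]
    exact Equiv.sum_comp e (fun j => M j j)
  have htr' : (Pᵀ * A * P).trace = ∑ j, lam j * t j := by
    rw [htr, ← Equiv.sum_comp e (fun j => hA.eigenvalues j * M j j)]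
    exact Finset.sum_congr rfl (fun j _ => by rw [he]; rfl)
  have hkey := key_bounds' hkn lam hlam t (fun j => hdiag0 _) (fun j => hdiag1 _) hts
  refine ⟨trace_eq_sum_eigs' hB, ?_, ?_⟩
  · rw [htr', sum_low_eq' hkn lam]; exact hkey.1
  · rw [htr', sum_high_eq' hkn lam]; exact hkey.2
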